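/- arXiv:0909.3789 — 3 statements merged into one kernel-verified Lean document; each statement's English description precedes it below -/
import Mathlib

section
/- (Strong Principal Minor Theorem for symmetric F2 matrices, one direction plus converse) Let A be a symmetric matrix over F2 of rank r, and X a set of r column indices. Then the columns of A indexed by X are linearly independent if and only if the principal submatrix A[X] has determinant 1. -/
open Matrix

def psub {V : Type*} [DecidableEq V] {K : Type*} [Field K]
    (A : Matrix V V K) (X : Finset V) :
    Matrix {v // v ∈ X} {v // v ∈ X} K :=
  A.submatrix Subtype.val Subtype.val

theorem stmt11 {V : Type*} [Fintype V] [DecidableEq V] (A : Matrix V V (ZMod 2))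
    (hA : A.IsSymm) (X : Finset V) (hcard : X.card = A.rank) :
    LinearIndependent (ZMod 2) (fun x : {v // v ∈ X} => Aᵀ x.1) ↔
      (psub A X).det = 1 := by
  classical
  have htwo : ∀ a : ZMod 2, a ≠ 0 → a = 1 := by decide
  have hsymm : ∀ i j, A i j = A j i := fun i j => (hA.apply j i : A i j = A j i)
  constructor
  · intro hli
    by_contra hdet
    have hdet0 : (psub A X).det = 0 := by
      by_contra h0
      exact hdet (htwo _ h0)
    obtain ⟨g, hg0, hgv⟩ := (Matrix.exists_mulVec_eq_zero_iff).mpr hdet0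
    set g' : V → ZMod 2 := fun u => if h : u ∈ X then g ⟨u, h⟩ else 0 with hg'
    have hsum : ∀ row : V → ZMod 2,
        ∑ u, row u * g' u = ∑ x : {v // v ∈ X}, row x.1 * g x := by
      intro row
      have h1 : ∑ u, row u * g' u = ∑ u ∈ X, row u * g' u :=
        (Finset.sum_subset (Finset.subset_univ X)
          (by intro u _ hu; simp [hg', hu])).symm
      rw [h1, ← Finset.sum_coe_sort X (fun u => row u * g' u)]
      exact Finset.sum_congr rfl fun x _ => by simp [hg']
    have hXv : ∀ x : {v // v ∈ X}, (A *ᵥ g') x.1 = 0 := by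
      intro x
      have := congrFun hgv x
      simpa [Matrix.mulVec, dotProduct, psub, hsum (A x.1)] using this
    have hle : Submodule.span (ZMod 2) (Set.range fun x : {v // v ∈ X} => Aᵀ x.1) ≤
        Submodule.span (ZMod 2) (Set.range Aᵀ) := by
      apply Submodule.span_mono
      rintro _ ⟨x, rfl⟩
      exact ⟨x.1, rfl⟩
    have hfr : Module.finrank (ZMod 2) (Submodule.span (ZMod 2) (Set.range Aᵀ)) ≤
        Module.finrank (ZMod 2)
          (Submodule.span (ZMod 2) (Set.range fun x : {v // v ∈ X} => Aᵀ x.1)) := by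
      rw [show Set.range Aᵀ = Set.range A.col from rfl, ← Matrix.rank_eq_finrank_span_cols, finrank_span_eq_card hli, Fintype.card_coe,
        hcard]
    have hspan := Submodule.eq_of_le_of_finrank_le hle hfr
    have hcol : ∀ w : V, ∃ c : {v // v ∈ X} → ZMod 2,
        ∑ x, c x • (fun x : {v // v ∈ X} => Aᵀ x.1) x = Aᵀ w := by
      intro w
      have : Aᵀ w ∈ Submodule.span (ZMod 2)
          (Set.range fun x : {v // v ∈ X} => Aᵀ x.1) := by
        rw [hspan]
        exact Submodule.subset_span ⟨w, rfl⟩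
      exact (Submodule.mem_span_range_iff_exists_fun (ZMod 2)).mp this
    have hAg : A *ᵥ g' = 0 := by
      funext w
      obtain ⟨c, hc⟩ := hcol w
      have hrow : ∀ u, A w u = ∑ x : {v // v ∈ X}, c x * A x.1 u := by
        intro u
        have := congrFun hc u
        simp only [Finset.sum_apply, Pi.smul_apply, smul_eq_mul,
          Matrix.transpose_apply] at this
        rw [hsymm w u, ← this]
        exact Finset.sum_congr rfl fun x _ => by rw [hsymm u x.1]
      calc (A *ᵥ g') w = ∑ u, A w u * g' u := rfl
        _ = ∑ u, (∑ x : {v // v ∈ X}, c x * A x.1 u) * g' u := by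
            simp_rw [← hrow]
        _ = ∑ x : {v // v ∈ X}, c x * ∑ u, A x.1 u * g' u := by
            simp_rw [Finset.sum_mul, mul_assoc]
            rw [Finset.sum_comm]
            simp_rw [← Finset.mul_sum]
        _ = ∑ x : {v // v ∈ X}, c x * (A *ᵥ g') x.1 := rfl
        _ = 0 := by simp [hXv]
    have hzero : ∑ x : {v // v ∈ X}, g x • (fun x : {v // v ∈ X} => Aᵀ x.1) x = 0 := by
      funext w
      have := congrFun hAg w
      simp only [Matrix.mulVec, dotProduct, Pi.zero_apply] at this
      rw [hsum (A w)] at this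
      simp only [Finset.sum_apply, Pi.smul_apply, smul_eq_mul, Pi.zero_apply,
        Matrix.transpose_apply]
      rw [← this]
      exact Finset.sum_congr rfl fun x _ => mul_comm _ _
    exact hg0 (funext (Fintype.linearIndependent_iff.mp hli g hzero))
  · intro hdet
    rw [Fintype.linearIndependent_iff]
    intro c hc x
    by_contra hcx
    have hc0 : c ≠ 0 := fun h => hcx (by rw [h]; rfl)
    have : (psub A X).det = 0 := by
      rw [← Matrix.exists_mulVec_eq_zero_iff]
      refine ⟨c, hc0, ?_⟩
      funext v
      have := congrFun hc v.1
      simp only [Finset.sum_apply, Pi.smul_apply, smul_eq_mul, Pi.zero_apply,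
        Matrix.transpose_apply] at this
      simp only [Matrix.mulVec, dotProduct, psub, Matrix.submatrix_apply,
        Pi.zero_apply]
      rw [← this]
      exact Finset.sum_congr rfl fun x _ => mul_comm _ _
    rw [this] at hdet
    exact one_ne_zero hdet.symm
end

section
/- Let G be a symmetric V×V matrix over F2 of rank r. Every maximal element (with respect to set inclusion) of the family {X ⊆ V : det G[X] = 1} has cardinality exactly r. -/
open Matrix

section Helpers

variable {K : Type*} [Field K]

/-- A submatrix (by arbitrary index maps) has rank at most the rank of the matrix. -/
lemma rank_submatrix_le' {V m n : Type*} [Fintype V] [DecidableEq V] [Fintype m] [Fintype n]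
    (G : Matrix V V K) (f : m → V) (g : n → V) :
    (G.submatrix f g).rank ≤ G.rank := by
  have h : G.submatrix f g =
      ((1 : Matrix V V K).submatrix f id) * G * ((1 : Matrix V V K).submatrix id g) := by
    ext i j
    simp [mul_apply, one_apply, Finset.sum_ite_eq, Finset.sum_ite_eq', mul_comm]
  rw [h]
  exact le_trans (Matrix.rank_mul_le_left _ _) (Matrix.rank_mul_le_right _ _)

/-- If the Schur complement of an invertible principal block vanishes, the rank of the
block matrix is at most the size of the block. -/
lemma rank_fromBlocks_le_of_schur_zero {m n : Type*} [Fintype m] [Fintype n]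
    [DecidableEq m] [DecidableEq n]
    (A : Matrix m m K) (B : Matrix m n K) (C : Matrix n m K) (D : Matrix n n K)
    (hA : IsUnit A.det) (hS : D - C * A⁻¹ * B = 0) :
    (fromBlocks A B C D).rank ≤ Fintype.card m := by
  have : Invertible A := A.invertibleOfIsUnitDet hA
  have hL : IsUnit (fromBlocks (1 : Matrix m m K) 0 (C * ⅟ A) 1).det := by
    rw [det_fromBlocks_zero₁₂, det_one, one_mul, det_one]; exact isUnit_one
  have hU : IsUnit (fromBlocks (1 : Matrix m m K) (⅟ A * B) 0 1).det := by
    rw [det_fromBlocks_zero₂₁, det_one, one_mul, det_one]; exact isUnit_one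
  have hmid : D - C * ⅟ A * B = 0 := by rwa [invOf_eq_nonsing_inv]
  rw [fromBlocks_eq_of_invertible₁₁ A B C D, hmid,
    Matrix.rank_mul_eq_left_of_isUnit_det _ _ hU,
    Matrix.rank_mul_eq_right_of_isUnit_det _ _ hL]
  -- now bound the rank of `fromBlocks A 0 0 0`
  have hEF : (fromBlocks A 0 0 (0 : Matrix n n K)) =
      (of fun i k => Sum.elim (fun a => A a k) (fun _ => 0) i : Matrix (m ⊕ n) m K) *
      (of fun k j => Sum.elim (fun a => if k = a then (1 : K) else 0) (fun _ => 0) j :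
        Matrix m (m ⊕ n) K) := by
    ext i j
    rcases i with i | i <;> rcases j with j | j <;>
      simp [mul_apply, fromBlocks, Finset.sum_ite_eq']
  rw [hEF]
  refine le_trans (Matrix.rank_mul_le_left _ _) ?_
  exact Matrix.rank_le_card_width _

/-- Disjoint union of finsets as an equivalence of subtypes. -/
def unionEquiv {V : Type*} [DecidableEq V] (X W : Finset V) (h : Disjoint X W) :
    ({v // v ∈ X} ⊕ {v // v ∈ W}) ≃ {v // v ∈ X ∪ W} where
  toFun := Sum.elim (fun x => ⟨x.val, Finset.mem_union_left _ x.2⟩)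
    (fun w => ⟨w.val, Finset.mem_union_right _ w.2⟩)
  invFun v := if hx : v.val ∈ X then .inl ⟨v.val, hx⟩ else
    .inr ⟨v.val, (Finset.mem_union.mp v.2).resolve_left hx⟩
  left_inv := by
    rintro (x | w)
    · simp
    · have : w.val ∉ X := fun hw => (Finset.disjoint_left.mp h) hw w.2
      simp [this]
  right_inv := by
    rintro ⟨v, hv⟩
    by_cases hx : v ∈ X <;> simp [hx]

variable {V : Type*} [Fintype V] [DecidableEq V]

/-- The "Schur complement function" of a principal submatrix. -/
noncomputable def scm (G : Matrix V V K) (X : Finset V) (x y : V) : K :=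
  G x y - ∑ k : {v // v ∈ X}, ∑ l : {v // v ∈ X},
    G x k.val * (psub G X)⁻¹ k l * G l.val y

lemma schur_entry (G : Matrix V V K) (X : Finset V) {ι : Type*} [Fintype ι]
    (f : ι → V) (i j : ι) :
    ((of fun i j => G (f i) (f j) : Matrix ι ι K)
      - (of fun (i : ι) (k : {v // v ∈ X}) => G (f i) k.val) * (psub G X)⁻¹
        * (of fun (k : {v // v ∈ X}) (j : ι) => G k.val (f j))) i j
      = scm G X (f i) (f j) := by
  simp only [Matrix.sub_apply, of_apply, mul_apply, Finset.sum_mul, scm]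
  rw [Finset.sum_comm]

lemma det_psub_union (G : Matrix V V K) (X W : Finset V) (h : Disjoint X W)
    (hA : IsUnit (psub G X).det) :
    (psub G (X ∪ W)).det = (psub G X).det *
      (of fun (i j : {v // v ∈ W}) => scm G X i.val j.val : Matrix _ _ K).det := by
  have : Invertible (psub G X) := (psub G X).invertibleOfIsUnitDet hA
  rw [← det_submatrix_equiv_self (unionEquiv X W h) (psub G (X ∪ W))]
  have hblk : (psub G (X ∪ W)).submatrix (unionEquiv X W h) (unionEquiv X W h) =
      fromBlocks (psub G X)
        (of fun (i : {v // v ∈ X}) (j : {v // v ∈ W}) => G i.val j.val)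
        (of fun (i : {v // v ∈ W}) (j : {v // v ∈ X}) => G i.val j.val)
        (of fun (i j : {v // v ∈ W}) => G i.val j.val) := by
    ext i j
    rcases i with i | i <;> rcases j with j | j <;> rfl
  rw [hblk, det_fromBlocks₁₁, invOf_eq_nonsing_inv]
  congr 1
  congr 1
  ext i j
  exact schur_entry G X Subtype.val i j

lemma exists_scm_ne (G : Matrix V V K) (X : Finset V)
    (hA : IsUnit (psub G X).det) (hlt : X.card < G.rank) :
    ∃ x y, x ∉ X ∧ y ∉ X ∧ scm G X x y ≠ 0 := by
  by_contra hc
  push_neg at hc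
  have : Invertible (psub G X) := (psub G X).invertibleOfIsUnitDet hA
  set e := Equiv.sumCompl (fun v => v ∈ X) with he
  have hM : G.submatrix e e = fromBlocks (psub G X)
      (of fun (i : {v // v ∈ X}) (j : {v // ¬ v ∈ X}) => G i.val j.val)
      (of fun (i : {v // ¬ v ∈ X}) (j : {v // v ∈ X}) => G i.val j.val)
      (of fun (i j : {v // ¬ v ∈ X}) => G i.val j.val) := by
    ext i j
    rcases i with i | i <;> rcases j with j | j <;> rfl
  have hrank : G.rank = (fromBlocks (psub G X)
      (of fun (i : {v // v ∈ X}) (j : {v // ¬ v ∈ X}) => G i.val j.val)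
      (of fun (i : {v // ¬ v ∈ X}) (j : {v // v ∈ X}) => G i.val j.val)
      (of fun (i j : {v // ¬ v ∈ X}) => G i.val j.val)).rank := by
    rw [← hM, rank_submatrix]
  have hS : (of fun (i j : {v // ¬ v ∈ X}) => G i.val j.val)
      - (of fun (i : {v // ¬ v ∈ X}) (j : {v // v ∈ X}) => G i.val j.val) * (psub G X)⁻¹
        * (of fun (i : {v // v ∈ X}) (j : {v // ¬ v ∈ X}) => G i.val j.val) = 0 := by
    ext i j
    rw [Matrix.zero_apply]
    exact (schur_entry G X Subtype.val i j).trans (hc i.val j.val i.2 j.2)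
  have hle := rank_fromBlocks_le_of_schur_zero (psub G X) _ _ _ hA hS
  have hcard : Fintype.card {v // v ∈ X} = X.card := Fintype.card_coe X
  rw [hrank] at hlt
  omega

lemma scm_symm (G : Matrix V V K) (hG : G.IsSymm) (X : Finset V) (x y : V) :
    scm G X x y = scm G X y x := by
  have hA : (psub G X)ᵀ = psub G X := by
    ext i j
    exact hG.apply i.val j.val
  have hinv : ((psub G X)⁻¹)ᵀ = (psub G X)⁻¹ := by
    rw [Matrix.transpose_nonsing_inv, hA]
  unfold scm
  rw [show G x y = G y x from (hG.apply x y).symm]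
  congr 1
  rw [Finset.sum_comm]
  refine Finset.sum_congr rfl fun a _ => Finset.sum_congr rfl fun b _ => ?_
  have e1 : G x b.val = G b.val x := hG.apply b.val x
  have e2 : G a.val y = G y a.val := hG.apply y a.val
  have e3 : (psub G X)⁻¹ b a = (psub G X)⁻¹ a b := congrFun (congrFun hinv a) b
  rw [e1, e2, e3]
  ring

end Helpers

theorem stmt12 {V : Type*} [Fintype V] [DecidableEq V] (G : Matrix V V (ZMod 2))
    (hG : G.IsSymm) (X : Finset V) (hX : (psub G X).det = 1)
    (hmax : ∀ Y : Finset V, X ⊂ Y → (psub G Y).det ≠ 1) :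
    X.card = G.rank := by
  have z2 : ∀ a : ZMod 2, a ≠ 0 → a = 1 := by decide
  have hAunit : IsUnit (psub G X).det := by rw [hX]; exact isUnit_one
  have hle : X.card ≤ G.rank := by
    have h1 : (psub G X).rank ≤ G.rank :=
      rank_submatrix_le' G (Subtype.val : {v // v ∈ X} → V) Subtype.val
    have h2 : (psub G X).rank = Fintype.card {v // v ∈ X} :=
      (psub G X).rank_of_isUnit ((Matrix.isUnit_iff_isUnit_det _).mpr hAunit)
    rw [Fintype.card_coe] at h2
    omega
  have hge : G.rank ≤ X.card := by
    by_contra hgt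
    push_neg at hgt
    obtain ⟨x, y, hx, hy, hs⟩ := exists_scm_ne G X hAunit hgt
    by_cases hd : ∃ u, u ∉ X ∧ scm G X u u ≠ 0
    · obtain ⟨u, hu, hsu⟩ := hd
      have hdisj : Disjoint X ({u} : Finset V) := by
        rw [Finset.disjoint_singleton_right]; exact hu
      have hss : X ⊂ X ∪ {u} :=
        (Finset.ssubset_iff_of_subset Finset.subset_union_left).mpr
          ⟨u, Finset.mem_union_right _ (Finset.mem_singleton_self u), hu⟩
      have hdet := det_psub_union G X {u} hdisj hAunit
      letI : Unique {v // v ∈ ({u} : Finset V)} :=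
        ⟨⟨⟨u, Finset.mem_singleton_self u⟩⟩,
         fun v => Subtype.ext (Finset.mem_singleton.mp v.2)⟩
      have hT : (of fun (i j : {v // v ∈ ({u} : Finset V)}) =>
          scm G X i.val j.val : Matrix _ _ (ZMod 2)).det = scm G X u u := by
        rw [det_unique, show (default : {v // v ∈ ({u} : Finset V)}) =
          ⟨u, Finset.mem_singleton_self u⟩ from
            Subtype.ext (Finset.mem_singleton.mp (Subtype.prop _)), of_apply]
      rw [hT, hX, one_mul] at hdet
      exact hmax _ hss (hdet.trans (z2 _ hsu))
    · push_neg at hd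
      have hxy : x ≠ y := by rintro rfl; exact hs (hd x hx)
      have hdisj : Disjoint X ({x, y} : Finset V) := by
        rw [Finset.disjoint_right]
        intro a ha
        rcases Finset.mem_insert.mp ha with rfl | h
        · exact hx
        · rw [Finset.mem_singleton] at h; subst h; exact hy
      have hss : X ⊂ X ∪ {x, y} :=
        (Finset.ssubset_iff_of_subset Finset.subset_union_left).mpr
          ⟨x, Finset.mem_union_right _ (Finset.mem_insert_self x _), hx⟩
      have hdet := det_psub_union G X {x, y} hdisj hAunit
      rw [hX, one_mul] at hdet
      have hxmem : x ∈ ({x, y} : Finset V) := Finset.mem_insert_self _ _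
      have hymem : y ∈ ({x, y} : Finset V) :=
        Finset.mem_insert_of_mem (Finset.mem_singleton_self _)
      have hyx : ¬ (y = x) := fun h => hxy h.symm
      let f2 : Fin 2 ≃ {v // v ∈ ({x, y} : Finset V)} :=
        { toFun := ![⟨x, hxmem⟩, ⟨y, hymem⟩]
          invFun := fun v => if v.val = x then 0 else 1
          left_inv := by
            intro i
            fin_cases i
            · simp
            · simp [hyx]
          right_inv := by
            rintro ⟨v, hv⟩
            rcases Finset.mem_insert.mp hv with rfl | h
            · simp
            · rw [Finset.mem_singleton] at h; subst h
              simp [hyx] }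
      have hdT : (of fun (i j : {v // v ∈ ({x, y} : Finset V)}) =>
            scm G X i.val j.val : Matrix _ _ (ZMod 2)).det =
          scm G X x x * scm G X y y - scm G X x y * scm G X y x := by
        rw [← det_submatrix_equiv_self f2, det_fin_two]
        rfl
      rw [hdT, hd x hx, hd y hy, scm_symm G hG X y x, z2 _ hs] at hdet
      norm_num at hdet
      exact hmax _ hss hdet
  exact le_antisymm hle hge
end

section
/- If G is a symmetric V×V matrix over F2 with det G = 1 (so G is invertible), then the families of maximal principal nonsingular submatrices of G+I and G⁻¹+I are equal: max{Y : det (G+I)[Y] = 1} = max{Y : det (G⁻¹+I)[Y] = 1}. -/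
open Matrix

section Aux

lemma det_fintype_irrel {m : Type*} [DecidableEq m] (i1 i2 : Fintype m) {K : Type*}
    [CommRing K] (A : Matrix m m K) :
    @Matrix.det m _ i1 K _ A = @Matrix.det m _ i2 K _ A := by
  cases Subsingleton.elim i1 i2; rfl

lemma det_one' {m : Type*} [DecidableEq m] (i : Fintype m) {K : Type*} [CommRing K] :
    @Matrix.det m _ i K _ 1 = 1 := @Matrix.det_one m _ i K _

set_option maxHeartbeats 1000000 in
lemma det_piecewise_one {n : Type*} [Fintype n] [DecidableEq n] {K : Type*} [CommRing K]
    (M : Matrix n n K) (s : Finset n) :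
    Matrix.det (n := n) (R := K) (s.piecewise M (1 : Matrix n n K))
      = (M.toSquareBlockProp (· ∈ s)).det := by
  have h3 := Matrix.twoBlockTriangular_det
    (Matrix.of (s.piecewise M (1 : Matrix n n K))) (· ∈ s)
    (by
      intro i hi j hj
      have hij : i ≠ j := fun h => hi (by rw [h]; exact hj)
      show s.piecewise M (1 : Matrix n n K) i j = 0
      rw [show s.piecewise M (1 : Matrix n n K) i j = (1 : Matrix n n K) i j from
        congrFun (Finset.piecewise_eq_of_notMem _ _ _ hi) j]
      exact Matrix.one_apply_ne hij)
  rw [show Matrix.det (n := n) (R := K) (s.piecewise M (1 : Matrix n n K))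
      = (Matrix.of (s.piecewise M (1 : Matrix n n K))).det from rfl, h3]
  have h4 : ((Matrix.of (s.piecewise M (1 : Matrix n n K))).toSquareBlockProp
      (fun i => ¬ (fun x => x ∈ s) i)) = 1 := by
    ext i j
    have hi : ¬ (i : n) ∈ s := i.2
    show s.piecewise M (1 : Matrix n n K) (i : n) (j : n) = (1 : Matrix _ _ K) i j
    rw [show s.piecewise M (1 : Matrix n n K) (i : n) (j : n) = (1 : Matrix n n K) i j from
      congrFun (Finset.piecewise_eq_of_notMem _ _ _ hi) (j : n)]
    by_cases hij : i = j
    · subst hij; rw [Matrix.one_apply_eq, Matrix.one_apply_eq]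
    · rw [Matrix.one_apply_ne (fun h => hij (Subtype.ext h)), Matrix.one_apply_ne hij]
  have h5 : ((Matrix.of (s.piecewise M (1 : Matrix n n K))).toSquareBlockProp ((· ∈ s)))
      = M.toSquareBlockProp (· ∈ s) := by
    ext i j
    have hi : (i : n) ∈ s := i.2
    show s.piecewise M (1 : Matrix n n K) (i : n) (j : n) = M (i : n) (j : n)
    exact congrFun (Finset.piecewise_eq_of_mem _ _ _ hi) (j : n)
  rw [h4, h5, det_one', mul_one]
  congr!

lemma det_add_one_eq_sum {n : Type*} [Fintype n] [DecidableEq n] {K : Type*} [CommRing K]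
    (M : Matrix n n K) :
    (M + 1).det = ∑ s : Finset n, ((M.toSquareBlockProp (· ∈ s)).det) := by
  have h1 : (M + 1).det
      = (Matrix.detRowAlternating (R := K) (n := n)).toMultilinearMap (M + (1 : Matrix n n K)) := by
    rw [AlternatingMap.coe_multilinearMap]; rfl
  rw [h1]; erw [MultilinearMap.map_add_univ]
  refine Finset.sum_congr rfl fun s _ => ?_
  have h2 : (Matrix.detRowAlternating (R := K) (n := n)).toMultilinearMap
      (s.piecewise M (1 : Matrix n n K))
      = Matrix.det (n := n) (R := K) (s.piecewise M (1 : Matrix n n K)) := by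
    rw [AlternatingMap.coe_multilinearMap]; rfl
  rw [h2, det_piecewise_one]

def mapEquiv {V : Type*} {Y : Finset V} (s : Finset {v // v ∈ Y}) :
    {a : {v // v ∈ Y} // a ∈ s} ≃ {v : V // v ∈ s.map (Function.Embedding.subtype _)} where
  toFun a := ⟨a.1.1, Finset.mem_map_of_mem _ a.2⟩
  invFun v := ⟨⟨v.1, Finset.property_of_mem_map_subtype s v.2⟩, (Finset.mem_map' _).1 v.2⟩
  left_inv _ := Subtype.ext (Subtype.ext rfl)
  right_inv _ := Subtype.ext rfl

lemma psub_nested {V : Type*} [DecidableEq V] {K : Type*} [Field K] [Fintype V]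
    (M : Matrix V V K) (Y : Finset V) (s : Finset {v // v ∈ Y}) :
    ((psub M Y).toSquareBlockProp (· ∈ s)).det
      = (psub M (s.map (Function.Embedding.subtype _))).det := by
  rw [← Matrix.det_submatrix_equiv_self (mapEquiv s) (psub M (s.map _))]
  rfl

lemma psub_one {V : Type*} [DecidableEq V] {K : Type*} [Field K] (Y : Finset V) :
    psub (1 : Matrix V V K) Y = 1 := by
  ext i j
  show (1 : Matrix V V K) i.1 j.1 = (1 : Matrix {v // v ∈ Y} {v // v ∈ Y} K) i j
  simp [Matrix.one_apply, Subtype.val_inj]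

lemma psub_det_add_one {V : Type*} [Fintype V] [DecidableEq V] {K : Type*} [Field K]
    (M : Matrix V V K) (Y : Finset V) :
    (psub (M + 1) Y).det = ∑ Z ∈ Y.powerset, (psub M Z).det := by
  have h0 : psub (M + 1) Y = psub M Y + 1 := by
    rw [show psub (M + 1) Y = psub M Y + psub 1 Y from rfl, psub_one]
  rw [h0, det_add_one_eq_sum]
  refine Finset.sum_bij (fun s _ => s.map (Function.Embedding.subtype _)) ?_ ?_ ?_ ?_
  · intro s _
    simp only [Finset.mem_powerset]
    intro v hv
    exact Finset.property_of_mem_map_subtype s hv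
  · intro s1 _ s2 _ h
    exact Finset.map_injective _ h
  · intro Z hZ
    refine ⟨Z.subtype _, Finset.mem_univ _, ?_⟩
    rw [Finset.subtype_map, Finset.filter_true_of_mem]
    intro x hx
    exact Finset.mem_powerset.1 hZ hx
  · intro s _
    exact psub_nested M Y s

set_option maxHeartbeats 2000000 in
lemma psub_inv_det {V : Type*} [Fintype V] [DecidableEq V] {K : Type*} [Field K]
    (G : Matrix V V K) (hdet : G.det = 1) (Z : Finset V) :
    (psub G⁻¹ Z).det = (psub G Zᶜ).det := by
  have hu : IsUnit G.det := hdet ▸ isUnit_one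
  set N : Matrix V V K :=
    Matrix.of (fun i j => if j ∈ Z then G⁻¹ i j else (1 : Matrix V V K) i j) with hN
  have h1 : G * N = Matrix.of (fun i j => if j ∈ Z then (1 : Matrix V V K) i j else G i j) := by
    ext i j
    by_cases h : j ∈ Z
    · calc (G * N) i j = ∑ k, G i k * G⁻¹ k j := by simp [Matrix.mul_apply, hN, h]
      _ = (G * G⁻¹) i j := (Matrix.mul_apply).symm
      _ = (1 : Matrix V V K) i j := by rw [Matrix.mul_nonsing_inv G hu]
      _ = _ := by simp [h]
    · calc (G * N) i j = ∑ k, G i k * (1 : Matrix V V K) k j := by simp [Matrix.mul_apply, hN, h]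
      _ = (G * (1 : Matrix V V K)) i j := (Matrix.mul_apply).symm
      _ = G i j := by rw [mul_one]
      _ = _ := by simp [h]
  have h2 : N.det = (psub G⁻¹ Z).det := by
    rw [Matrix.twoBlockTriangular_det' N (· ∈ Z) (by
      intro i hi j hj
      show (if j ∈ Z then G⁻¹ i j else (1 : Matrix V V K) i j) = 0
      rw [if_neg hj]
      exact Matrix.one_apply_ne (fun h => hj (h ▸ hi)))]
    have e1 : N.toSquareBlockProp (· ∈ Z) = psub G⁻¹ Z := by
      ext i j
      show (if (j : V) ∈ Z then G⁻¹ (i : V) (j : V) else _) = G⁻¹ (i : V) (j : V)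
      rw [if_pos j.2]
    have e2 : N.toSquareBlockProp (fun i => ¬ (fun x => x ∈ Z) i) = 1 := by
      ext i j
      have hj : ¬ (j : V) ∈ Z := j.2
      show (if (j : V) ∈ Z then G⁻¹ (i : V) (j : V) else (1 : Matrix V V K) (i : V) (j : V))
        = (1 : Matrix _ _ K) i j
      rw [if_neg hj]
      by_cases h : i = j
      · subst h; rw [Matrix.one_apply_eq, Matrix.one_apply_eq]
      · rw [Matrix.one_apply_ne (fun hh => h (Subtype.ext hh)), Matrix.one_apply_ne h]
    rw [e1, e2, det_one', mul_one]
    congr!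
  have h3 : (G * N).det = (psub G Zᶜ).det := by
    rw [Matrix.twoBlockTriangular_det (G * N) (· ∈ Z) (by
      intro i hi j hj
      rw [h1]
      show (if j ∈ Z then (1 : Matrix V V K) i j else G i j) = 0
      rw [if_pos hj]
      exact Matrix.one_apply_ne (fun h => hi (h ▸ hj)))]
    have e1 : (G * N).toSquareBlockProp (· ∈ Z) = 1 := by
      ext i j
      have hj : (j : V) ∈ Z := j.2
      rw [Matrix.toSquareBlockProp]
      show (G * N) (i : V) (j : V) = (1 : Matrix _ _ K) i j
      rw [h1]
      show (if (j : V) ∈ Z then (1 : Matrix V V K) (i : V) (j : V) else _) = _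
      rw [if_pos hj]
      by_cases h : i = j
      · subst h; rw [Matrix.one_apply_eq, Matrix.one_apply_eq]
      · rw [Matrix.one_apply_ne (fun hh => h (Subtype.ext hh)), Matrix.one_apply_ne h]
    have e2 : ((G * N).toSquareBlockProp (fun i => ¬ (fun x => x ∈ Z) i)).det
        = (psub G Zᶜ).det := by
      set A := (G * N).toSquareBlockProp (fun i => ¬ (fun x => x ∈ Z) i) with hA
      set e : {v // v ∈ Zᶜ} ≃ {v : V // ¬ v ∈ Z} :=
        Equiv.subtypeEquivRight (fun x => Finset.mem_compl) with he
      rw [← Matrix.det_submatrix_equiv_self e A]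
      have hAe : A.submatrix e e = psub G Zᶜ := by
        ext i j
        have hj : ¬ (j : V) ∈ Z := Finset.mem_compl.1 j.2
        show (G * N) (i : V) (j : V) = G (i : V) (j : V)
        rw [h1]
        show (if (j : V) ∈ Z then _ else G (i : V) (j : V)) = _
        rw [if_neg hj]
      rw [hAe]
    rw [e1, e2, det_one', one_mul]
  have := Matrix.det_mul G N
  rw [h3, hdet, one_mul, h2] at this
  exact this.symm

lemma card_filter_superset {V : Type*} [Fintype V] [DecidableEq V] (A : Finset V) :
    (Finset.univ.filter (fun Z : Finset V => A ⊆ Z)).card = 2 ^ (Aᶜ.card) := by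
  rw [← Finset.card_powerset]
  apply Finset.card_bij (fun Z _ => Z \ A)
  · intro Z hZ
    simp only [Finset.mem_powerset]
    intro x hx
    rw [Finset.mem_sdiff] at hx
    exact Finset.mem_compl.2 hx.2
  · intro Z1 h1 Z2 h2 h
    have h1' : A ⊆ Z1 := (Finset.mem_filter.1 h1).2
    have h2' : A ⊆ Z2 := (Finset.mem_filter.1 h2).2
    rw [← Finset.sdiff_union_of_subset h1', ← Finset.sdiff_union_of_subset h2', h]
  · intro W hW
    have hW' : W ⊆ Aᶜ := Finset.mem_powerset.1 hW
    have hdisj : Disjoint W A := by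
      rw [Finset.disjoint_left]
      intro x hx hxA
      exact Finset.mem_compl.1 (hW' hx) hxA
    refine ⟨W ∪ A, Finset.mem_filter.2 ⟨Finset.mem_univ _, Finset.subset_union_right⟩, ?_⟩
    exact Finset.union_sdiff_cancel_right hdisj

lemma compl_subset_iff_union_univ {V : Type*} [Fintype V] [DecidableEq V] (Y T : Finset V) :
    Yᶜ ⊆ T ↔ Y ∪ T = Finset.univ := by
  constructor
  · intro h
    apply Finset.eq_univ_of_forall
    intro x
    rw [Finset.mem_union]
    by_cases hx : x ∈ Y
    · exact Or.inl hx
    · exact Or.inr (h (Finset.mem_compl.2 hx))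
  · intro h x hx
    have := Finset.mem_univ (α := V) x
    rw [← h, Finset.mem_union] at this
    exact this.resolve_left (Finset.mem_compl.1 hx)

lemma key_sum {V : Type*} [Fintype V] [DecidableEq V] (G : Matrix V V (ZMod 2))
    (hdet : G.det = 1) (Y : Finset V) :
    (psub (G⁻¹ + 1) Y).det
      = ∑ Z ∈ Finset.univ.filter (fun Z : Finset V => Y ⊆ Z), (psub (G + 1) Z).det := by
  rw [psub_det_add_one]
  have hL : ∑ T ∈ Y.powerset, (psub G⁻¹ T).det
      = ∑ T ∈ Y.powerset, (psub G Tᶜ).det :=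
    Finset.sum_congr rfl fun T _ => psub_inv_det G hdet T
  rw [hL]
  have hR : ∑ Z ∈ Finset.univ.filter (fun Z : Finset V => Y ⊆ Z), (psub (G + 1) Z).det
      = ∑ Z ∈ Finset.univ.filter (fun Z : Finset V => Y ⊆ Z),
          ∑ T ∈ Z.powerset, (psub G T).det :=
    Finset.sum_congr rfl fun Z _ => psub_det_add_one G Z
  rw [hR]
  have hswap : ∑ Z ∈ Finset.univ.filter (fun Z : Finset V => Y ⊆ Z),
      ∑ T ∈ Z.powerset, (psub G T).det
      = ∑ T : Finset V,
          ∑ _Z ∈ Finset.univ.filter (fun Z : Finset V => Y ⊆ Z ∧ T ⊆ Z), (psub G T).det := by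
    apply Finset.sum_comm'
    intro Z T
    simp only [Finset.mem_filter, Finset.mem_univ, true_and, Finset.mem_powerset]
    tauto
  rw [hswap]
  have hterm : ∀ T : Finset V,
      ∑ _Z ∈ Finset.univ.filter (fun Z : Finset V => Y ⊆ Z ∧ T ⊆ Z), (psub G T).det
      = if Yᶜ ⊆ T then (psub G T).det else 0 := by
    intro T
    rw [Finset.sum_const]
    have hc : (Finset.univ.filter (fun Z : Finset V => Y ⊆ Z ∧ T ⊆ Z)).card
        = 2 ^ ((Y ∪ T)ᶜ.card) := by
      rw [← card_filter_superset (Y ∪ T)]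
      congr 1
      apply Finset.filter_congr
      intro Z _
      simp [Finset.union_subset_iff]
    rw [hc]
    by_cases h : (Y ∪ T)ᶜ.card = 0
    · have h1 : (Y ∪ T)ᶜ = ∅ := Finset.card_eq_zero.1 h
      have h2 : Y ∪ T = Finset.univ := by
        rwa [← Finset.compl_eq_empty_iff]
      have h3 : Yᶜ ⊆ T := (compl_subset_iff_union_univ Y T).2 h2
      rw [h, pow_zero, one_smul, if_pos h3]
    · have h3 : ¬ Yᶜ ⊆ T := by
        intro hsub
        apply h
        rw [(compl_subset_iff_union_univ Y T).1 hsub, Finset.compl_univ, Finset.card_empty]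
      rw [if_neg h3]
      have : ((2 : ℕ) ^ ((Y ∪ T)ᶜ.card) : ℕ) • (psub G T).det
          = ((2 : ℕ) ^ ((Y ∪ T)ᶜ.card) : ZMod 2) * (psub G T).det := by
        rw [nsmul_eq_mul, Nat.cast_pow]
      rw [this]
      have h2 : ((2 : ℕ) : ZMod 2) = 0 := by decide
      rw [show ((2:ℕ) ^ ((Y ∪ T)ᶜ.card) : ZMod 2) = ((2:ℕ) : ZMod 2) ^ ((Y ∪ T)ᶜ.card) by push_cast; ring,
        h2, zero_pow h, zero_mul]
  rw [Finset.sum_congr rfl (fun T _ => hterm T)]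
  rw [Finset.sum_ite, Finset.sum_const_zero, add_zero]
  apply Finset.sum_nbij' (i := fun T => Tᶜ) (j := fun T => Tᶜ)
  · intro T hT
    rw [Finset.mem_powerset] at hT
    rw [Finset.mem_filter]
    exact ⟨Finset.mem_univ _, Finset.compl_subset_compl.2 hT⟩
  · intro T hT
    rw [Finset.mem_filter] at hT
    rw [Finset.mem_powerset, ← Finset.compl_subset_compl, compl_compl]
    exact hT.2
  · intro T _; exact compl_compl T
  · intro T _; exact compl_compl T
  · intro T _; rfl

end Aux

lemma max_dir {V : Type*} [Fintype V] [DecidableEq V] (G : Matrix V V (ZMod 2))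
    (hdet : G.det = 1) (Y : Finset V)
    (h1 : (psub (G + 1) Y).det = 1)
    (h2 : ∀ Z : Finset V, Y ⊂ Z → (psub (G + 1) Z).det ≠ 1) :
    (psub (G⁻¹ + 1) Y).det = 1 ∧ ∀ Z : Finset V, Y ⊂ Z → (psub (G⁻¹ + 1) Z).det ≠ 1 := by
  have hz : ∀ x : ZMod 2, x ≠ 1 → x = 0 := by decide
  constructor
  · rw [key_sum G hdet Y]
    rw [Finset.sum_eq_single_of_mem Y (by simp)]
    · exact h1
    · intro Z hZ hne
      apply hz
      apply h2
      rw [Finset.mem_filter] at hZ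
      exact (Finset.ssubset_iff_subset_ne).2 ⟨hZ.2, Ne.symm hne⟩
  · intro Z hYZ
    rw [key_sum G hdet Z]
    rw [Finset.sum_eq_zero]
    · decide
    · intro W hW
      rw [Finset.mem_filter] at hW
      exact hz _ (h2 W (lt_of_lt_of_le hYZ hW.2))

theorem stmt16 {V : Type*} [Fintype V] [DecidableEq V] (G : Matrix V V (ZMod 2))
    (hG : G.IsSymm) (hdet : G.det = 1) :
    ∀ Y : Finset V,
      ((psub (G + 1) Y).det = 1 ∧ ∀ Z : Finset V, Y ⊂ Z → (psub (G + 1) Z).det ≠ 1) ↔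
      ((psub (G⁻¹ + 1) Y).det = 1 ∧ ∀ Z : Finset V, Y ⊂ Z → (psub (G⁻¹ + 1) Z).det ≠ 1) := by
  intro Y
  have hu : IsUnit G.det := hdet ▸ isUnit_one
  have hdet' : (G⁻¹).det = 1 := by
    rw [Matrix.det_nonsing_inv, hdet]
    simp
  have hGG : (G⁻¹)⁻¹ = G := Matrix.nonsing_inv_nonsing_inv G hu
  constructor
  · rintro ⟨h1, h2⟩
    exact max_dir G hdet Y h1 h2
  · rintro ⟨h1, h2⟩
    have := max_dir G⁻¹ hdet' Y h1 h2
    rwa [hGG] at this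
end
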